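/- arXiv:1205.2753 — 3 statements merged into one kernel-verified Lean document; each statement's English description precedes it below -/
import Mathlib

section
/- Fiber contraction theorem: let F : X → X be a map on a topological space X with a globally attracting fixed point x* (i.e. F^n(x) → x* for all x), let Y be a complete metric space, and let G : X × Y → Y be continuous with y ↦ G(x,y) a contraction with uniform constant q < 1 for each x. If y* is the fixed point of G(x*,·) and G is continuous at points (x*, y) for all y, then (x*, y*) is a globally attracting fixed point of the map (x,y) ↦ (F(x), G(x,y)) restricted to points whose X-component converges to x* — more precisely, for every (x,y) with F^n(x) → x*, the iterates of (x,y) under (F,G) converge to (x*,y*). -/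
open Filter

private lemma aux_tendsto_zero {q : ℝ} (hq0 : 0 ≤ q) (hq : q < 1) (d ε : ℕ → ℝ)
    (hd : ∀ n, 0 ≤ d n)
    (hrec : ∀ n, d (n + 1) ≤ q * d n + ε n)
    (hε : Tendsto ε atTop (nhds 0)) :
    Tendsto d atTop (nhds 0) := by
  rw [Metric.tendsto_atTop]
  intro η hη
  have h1q : 0 < 1 - q := by linarith
  have hδ : 0 < η * (1 - q) / 2 := by positivity
  obtain ⟨N, hN⟩ := (Metric.tendsto_atTop.1 hε) (η * (1 - q) / 2) hδ
  have hεlt : ∀ n, N ≤ n → ε n < η * (1 - q) / 2 := by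
    intro n hn
    have := hN n hn
    rw [Real.dist_0_eq_abs] at this
    exact lt_of_le_of_lt (le_abs_self _) this
  have key : ∀ k, d (N + k) ≤ q ^ k * d N + η / 2 := by
    intro k
    induction k with
    | zero => simp; linarith
    | succ k ih =>
      have h2 := hεlt (N + k) (Nat.le_add_right _ _)
      have h3 : d (N + (k + 1)) = d ((N + k) + 1) := by ring_nf
      have h4 := hrec (N + k)
      have h5 : q * d (N + k) ≤ q * (q ^ k * d N + η / 2) :=
        mul_le_mul_of_nonneg_left ih hq0
      have h7 : q * (q ^ k * d N + η / 2) = q ^ (k + 1) * d N + q * (η / 2) := by ring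
      have h8 : q * (η / 2) + η * (1 - q) / 2 = η / 2 := by ring
      linarith
  have hpow : Tendsto (fun k => q ^ k * d N) atTop (nhds 0) := by
    simpa using (tendsto_pow_atTop_nhds_zero_of_lt_one hq0 hq).mul_const (d N)
  obtain ⟨K, hK⟩ := (Metric.tendsto_atTop.1 hpow) (η / 2) (by positivity)
  refine ⟨N + K, fun n hn => ?_⟩
  have hk : n = N + (n - N) := by omega
  have hk2 : K ≤ n - N := by omega
  have h3 := hK (n - N) hk2
  rw [Real.dist_0_eq_abs] at h3
  have hnn : 0 ≤ q ^ (n - N) * d N := mul_nonneg (pow_nonneg hq0 _) (hd N)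
  rw [abs_of_nonneg hnn] at h3
  rw [Real.dist_0_eq_abs, abs_of_nonneg (hd n)]
  have h4 := key (n - N)
  rw [← hk] at h4
  linarith

/-- fiber contraction theorem: if `F : X → X` has a globally
attracting fixed point `x*`, and `G : X × Y → Y` is continuous with each fiber
map `G(x,·)` a contraction with uniform constant `q < 1` on the complete metric
space `Y`, and `y*` is the fixed point of `G(x*,·)`, then every orbit of the
skew-product `(x,y) ↦ (F x, G x y)` converges to `(x*, y*)`. -/
theorem fiber_contraction_theorem
    (X : Type*) [TopologicalSpace X]
    (Y : Type*) [MetricSpace Y] [CompleteSpace Y]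
    (F : X → X) (xstar : X) (hFfix : F xstar = xstar)
    (hattract : ∀ x : X, Tendsto (fun n => F^[n] x) atTop (nhds xstar))
    (G : X → Y → Y) (hGcont : Continuous fun p : X × Y => G p.1 p.2)
    (q : ℝ) (hq0 : 0 ≤ q) (hq : q < 1)
    (hcontr : ∀ x : X, ∀ y y' : Y, dist (G x y) (G x y') ≤ q * dist y y')
    (ystar : Y) (hGfix : G xstar ystar = ystar) :
    ∀ x : X, ∀ y : Y,
      Tendsto (fun n => (fun p : X × Y => (F p.1, G p.1 p.2))^[n] (x, y))
        atTop (nhds (xstar, ystar)) := by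
  intro x y
  set T := fun p : X × Y => (F p.1, G p.1 p.2) with hT
  have hfst : ∀ n, (T^[n] (x, y)).1 = F^[n] x := by
    intro n
    induction n with
    | zero => rfl
    | succ n ih =>
      rw [Function.iterate_succ_apply', Function.iterate_succ_apply']
      exact congrArg F ih
  have hsnd : ∀ n, (T^[n + 1] (x, y)).2 = G (F^[n] x) (T^[n] (x, y)).2 := by
    intro n
    rw [Function.iterate_succ_apply']
    exact congrArg (fun a => G a (T^[n] (x, y)).2) (hfst n)
  set d := fun n => dist (T^[n] (x, y)).2 ystar with hd
  set ε := fun n => dist (G (F^[n] x) ystar) ystar with hε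
  have hrec : ∀ n, d (n + 1) ≤ q * d n + ε n := by
    intro n
    have htri := dist_triangle (G (F^[n] x) (T^[n] (x, y)).2) (G (F^[n] x) ystar) ystar
    have h2 := hcontr (F^[n] x) (T^[n] (x, y)).2 ystar
    simp only [hd, hε, hsnd n]
    linarith
  have hεten : Tendsto ε atTop (nhds 0) := by
    have hc : Continuous fun z : X => G z ystar :=
      hGcont.comp (continuous_id.prodMk continuous_const)
    have h1 : Tendsto (fun n => G (F^[n] x) ystar) atTop (nhds ystar) := by
      have := (hc.tendsto xstar).comp (hattract x)
      rwa [hGfix] at this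
    exact (tendsto_iff_dist_tendsto_zero).1 h1
  have hdten := aux_tendsto_zero hq0 hq d ε (fun n => dist_nonneg) hrec hεten
  have hsnd' : Tendsto (fun n => (T^[n] (x, y)).2) atTop (nhds ystar) :=
    (tendsto_iff_dist_tendsto_zero).2 hdten
  have hfst' : Tendsto (fun n => (T^[n] (x, y)).1) atTop (nhds xstar) := by
    have : (fun n => (T^[n] (x, y)).1) = fun n => F^[n] x := funext hfst
    rw [this]; exact hattract x
  have := hfst'.prodMk_nhds hsnd'
  simpa using this
end

section
/- Let Y be a Banach space, ρ < 0, C > 0, and let f : ℝ × Y → Y be continuous, bounded by F in norm, and Lipschitz in y with constant L satisfying CL/(-ρ) < 1. Let Ψ(t,τ) satisfy ‖Ψ(t,τ)‖ ≤ Ce^{ρ(t-τ)} for τ ≤ t, together with the evolution property Ψ(t,s)Ψ(s,τ) = Ψ(t,τ) and differentiability ∂_t Ψ(t,τ) = A(t)Ψ(t,τ). Then the unique fixed point y* ∈ BC(ℝ,Y) of T(y)(t) = ∫_{-∞}^t Ψ(t,τ) f(τ, y(τ)) dτ is a solution of the ODE y'(t) = A(t)y(t) + f(t, y(t)) that is bounded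 on all of ℝ, with sup_t ‖y*(t)‖ ≤ CF/(-ρ). -/
open MeasureTheory Real Set

/-- Auxiliary: integrability and value of `∫ τ in Iic c, exp (b * τ)` for `b > 0`. -/
theorem perron_aux_exp (b c : ℝ) (hb : 0 < b) :
    MeasureTheory.IntegrableOn (fun τ : ℝ => Real.exp (b * τ)) (Set.Iic c) ∧
      ∫ τ in Set.Iic c, Real.exp (b * τ) = Real.exp (b * c) / b := by
  constructor
  · have m : MeasurableEmbedding fun x : ℝ => -x :=
      (Homeomorph.neg ℝ).measurableEmbedding
    have h1 : IntegrableOn (fun x : ℝ => Real.exp (-b * x)) (Ici (-c)) :=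
      (integrableOn_Ici_iff_integrableOn_Ioi (by finiteness)).mpr (exp_neg_integrableOn_Ioi _ hb)
    have heq : ((fun τ : ℝ => Real.exp (b * τ)) ∘ fun x : ℝ => -x)
        = fun x : ℝ => Real.exp (-b * x) := by
      funext x; simp only [Function.comp_apply]; congr 1; ring
    have hpre : ((fun x : ℝ => -x) ⁻¹' Iic c) = Ici (-c) := by
      ext x; simp [neg_le]
    have h2 : IntegrableOn (fun τ : ℝ => Real.exp (b * τ)) (Iic c)
        (Measure.map (fun x : ℝ => -x) volume) := by
      rw [m.integrableOn_map_iff, heq, hpre]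
      exact h1
    rwa [show Measure.map (fun x : ℝ => -x) volume = volume from
      Measure.map_neg_eq_self volume] at h2
  · have e1 := integral_comp_neg_Iic c (fun x => Real.exp (-b * x))
    have e2 : (fun x : ℝ => Real.exp (-b * -x)) = fun x : ℝ => Real.exp (b * x) := by
      funext x; congr 1; ring
    rw [e2] at e1
    rw [e1]
    have e3 := integral_comp_mul_left_Ioi (fun x => Real.exp (-x)) (-c) hb
    have e4 : (fun x : ℝ => Real.exp (-(b * x))) = fun x : ℝ => Real.exp (-b * x) := by
      funext x; congr 1; ring
    rw [e4] at e3
    rw [e3, integral_exp_neg_Ioi]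
    rw [smul_eq_mul]
    rw [show -(b * -c) = b * c by ring]
    rw [div_eq_inv_mul]

/-- the unique fixed point `y*` of the Perron operator
`T(y)(t) = ∫_{-∞}^t Ψ(t,τ) f(τ,y(τ)) dτ` is a solution, bounded on all of `ℝ`
by `C·F/(-ρ)`, of the ODE `y' = A(t) y + f(t,y)`. -/
theorem perron_fixed_point_solves_ode
    (Y : Type*) [NormedAddCommGroup Y] [NormedSpace ℝ Y] [CompleteSpace Y]
    (ρ C F L : ℝ) (hρ : ρ < 0) (hC : 0 < C) (hF : 0 ≤ F) (hL : 0 ≤ L)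
    (hq : C * L / (-ρ) < 1)
    (f : ℝ → Y → Y) (hfcont : Continuous fun p : ℝ × Y => f p.1 p.2)
    (hfbdd : ∀ t y, ‖f t y‖ ≤ F)
    (hfLip : ∀ t y y', ‖f t y - f t y'‖ ≤ L * ‖y - y'‖)
    (A : ℝ → Y →L[ℝ] Y)
    (Ψ : ℝ → ℝ → Y →L[ℝ] Y)
    (hΨid : ∀ t : ℝ, Ψ t t = ContinuousLinearMap.id ℝ Y)
    (hΨev : ∀ t s τ : ℝ, (Ψ t s).comp (Ψ s τ) = Ψ t τ)
    (hΨbdd : ∀ t τ : ℝ, τ ≤ t → ‖Ψ t τ‖ ≤ C * exp (ρ * (t - τ)))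
    (hΨ' : ∀ τ t : ℝ, ∀ y : Y, HasDerivAt (fun s => Ψ s τ y) (A t (Ψ t τ y)) t)
    (ystar : BoundedContinuousFunction ℝ Y)
    (hfix : ∀ t : ℝ, ystar t = ∫ τ in Iic t, Ψ t τ (f τ (ystar τ))) :
    (∀ t : ℝ, HasDerivAt (fun s => ystar s) (A t (ystar t) + f t (ystar t)) t) ∧
      ∀ t : ℝ, ‖ystar t‖ ≤ C * F / (-ρ) := by
  set g : ℝ → Y := fun τ => f τ (ystar τ) with hgdef
  have hgcont : Continuous g := hfcont.comp (continuous_id.prodMk ystar.continuous)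
  have hgF : ∀ τ, ‖g τ‖ ≤ F := fun τ => hfbdd τ (ystar τ)
  have hρ' : (0:ℝ) < -ρ := by linarith
  have hΨidz : ∀ t : ℝ, ∀ z : Y, Ψ t t z = z := fun t z => by rw [hΨid]; rfl
  have hΨcomp : ∀ s u τ : ℝ, ∀ z : Y, Ψ s u (Ψ u τ z) = Ψ s τ z := by
    intro s u τ z
    calc Ψ s u (Ψ u τ z) = ((Ψ s u).comp (Ψ u τ)) z := rfl
      _ = Ψ s τ z := by rw [hΨev]
  have hΨC : ∀ s τ : ℝ, τ ≤ s → ‖Ψ s τ‖ ≤ C := by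
    intro s τ h
    refine (hΨbdd s τ h).trans ?_
    have h1 : exp (ρ * (s - τ)) ≤ 1 := exp_le_one_iff.mpr (by nlinarith)
    nlinarith
  have hap : ∀ s τ : ℝ, ∀ z : Y, τ ≤ s → ‖Ψ s τ z‖ ≤ C * ‖z‖ := fun s τ z h =>
    ((Ψ s τ).le_opNorm z).trans (mul_le_mul_of_nonneg_right (hΨC s τ h) (norm_nonneg z))
  have hΨcont : ∀ τ : ℝ, ∀ z : Y, Continuous fun s => Ψ s τ z := fun τ z =>
    continuous_iff_continuousAt.2 fun t => (hΨ' τ t z).continuousAt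
  -- continuity of the integrand in the second variable, below the diagonal
  have hcontOn : ∀ s : ℝ, ContinuousOn (fun τ => Ψ s τ (g τ)) (Iio s) := by
    intro s τ₀ hτ₀
    have hb : Filter.Tendsto (fun τ => C * ‖g τ - Ψ τ τ₀ (g τ₀)‖) (nhdsWithin τ₀ (Iio s))
        (nhds 0) := by
      have hc : Continuous fun τ => C * ‖g τ - Ψ τ τ₀ (g τ₀)‖ :=
        continuous_const.mul ((hgcont.sub (hΨcont τ₀ (g τ₀))).norm)
      have h0 : C * ‖g τ₀ - Ψ τ₀ τ₀ (g τ₀)‖ = 0 := by rw [hΨidz]; simp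
      simpa [h0] using (hc.tendsto τ₀).mono_left nhdsWithin_le_nhds
    have : Filter.Tendsto (fun τ => Ψ s τ (g τ)) (nhdsWithin τ₀ (Iio s))
        (nhds (Ψ s τ₀ (g τ₀))) := by
      rw [← tendsto_sub_nhds_zero_iff]
      refine squeeze_zero_norm' ?_ hb
      filter_upwards [self_mem_nhdsWithin] with τ hτ
      have heq : Ψ s τ (g τ) - Ψ s τ₀ (g τ₀) = Ψ s τ (g τ - Ψ τ τ₀ (g τ₀)) := by
        rw [map_sub, hΨcomp]
      rw [heq]
      exact hap s τ _ (le_of_lt hτ)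
    exact this
  have hmeas : ∀ s : ℝ, AEStronglyMeasurable (fun τ => Ψ s τ (g τ))
      (volume.restrict (Iic s)) := by
    intro s
    have h1 := (hcontOn s).aestronglyMeasurable (μ := volume) measurableSet_Iio
    rwa [Measure.restrict_congr_set Iio_ae_eq_Iic] at h1
  have Eint : ∀ s : ℝ, IntegrableOn (fun τ => exp (ρ * (s - τ))) (Iic s) := by
    intro s
    have h2 : (fun τ : ℝ => exp (ρ * (s - τ))) = fun τ => exp (ρ * s) * exp (-ρ * τ) := by
      funext τ; rw [← exp_add]; congr 1; ring
    rw [h2]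
    exact ((perron_aux_exp (-ρ) s hρ').1).const_mul _
  have Eval : ∀ s : ℝ, ∫ τ in Iic s, exp (ρ * (s - τ)) = 1 / (-ρ) := by
    intro s
    have h2 : (fun τ : ℝ => exp (ρ * (s - τ))) = fun τ => exp (ρ * s) * exp (-ρ * τ) := by
      funext τ; rw [← exp_add]; congr 1; ring
    rw [h2, MeasureTheory.integral_const_mul, (perron_aux_exp (-ρ) s hρ').2,
      ← mul_div_assoc, ← exp_add, show ρ * s + -ρ * s = 0 by ring, exp_zero]
  have hint : ∀ s : ℝ, IntegrableOn (fun τ => Ψ s τ (g τ)) (Iic s) := by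
    intro s
    refine Integrable.mono' ((Eint s).const_mul (C * F)) (hmeas s) ?_
    filter_upwards [ae_restrict_mem measurableSet_Iic] with τ hτ
    calc ‖Ψ s τ (g τ)‖ ≤ ‖Ψ s τ‖ * ‖g τ‖ := (Ψ s τ).le_opNorm _
      _ ≤ (C * exp (ρ * (s - τ))) * F :=
          mul_le_mul (hΨbdd s τ hτ) (hgF τ) (norm_nonneg _) (by positivity)
      _ = C * F * exp (ρ * (s - τ)) := by ring
  -- splitting the fixed point integral at an intermediate time
  have hsplit : ∀ a s : ℝ, a ≤ s →
      (ystar s : Y) = Ψ s a (ystar a) + ∫ τ in Ioc a s, Ψ s τ (g τ) := by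
    intro a s has
    have huni : Iic a ∪ Ioc a s = Iic s := Iic_union_Ioc_eq_Iic has
    have hi1 : IntegrableOn (fun τ => Ψ s τ (g τ)) (Iic a) :=
      (hint s).mono_set (Iic_subset_Iic.mpr has)
    have hi2 : IntegrableOn (fun τ => Ψ s τ (g τ)) (Ioc a s) :=
      (hint s).mono_set (fun τ hτ => hτ.2)
    have hdisj : Disjoint (Iic a) (Ioc a s) := by
      refine Set.disjoint_left.mpr ?_
      intro τ h1 h2
      exact absurd h1 (not_le.mpr h2.1)
    have hu := setIntegral_union hdisj measurableSet_Ioc hi1 hi2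
    rw [hfix s, ← huni, hu]
    congr 1
    have hcongr : ∀ τ ∈ Iic a, Ψ s τ (g τ) = Ψ s a (Ψ a τ (g τ)) :=
      fun τ _ => (hΨcomp s a τ _).symm
    rw [setIntegral_congr_fun measurableSet_Iic hcongr,
      ContinuousLinearMap.integral_comp_comm _ (hint a), ← hfix a]
  constructor
  · -- the fixed point solves the ODE
    intro t₀
    set t₁ : ℝ := t₀ - 1 with ht₁
    set t₂ : ℝ := t₀ + 1 with ht₂
    set h : ℝ → Y := fun τ => Ψ t₁ τ (g τ) with hhdef
    have hcont_h : ContinuousOn h (Iio t₂) := by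
      have hc : ContinuousOn (fun τ => Ψ t₁ t₂ (Ψ t₂ τ (g τ))) (Iio t₂) :=
        (Ψ t₁ t₂).continuous.comp_continuousOn (hcontOn t₂)
      exact hc.congr fun τ _ => (hΨcomp t₁ t₂ τ (g τ)).symm
    have hIcc : ∀ s : ℝ, s < t₂ → IntegrableOn h (Icc t₁ s) := by
      intro s hs
      refine (hcont_h.mono ?_).integrableOn_compact isCompact_Icc
      intro τ hτ
      exact lt_of_le_of_lt hτ.2 hs
    set W : ℝ → Y := fun u => ∫ τ in t₁..u, h τ with hWdef
    have hW' : HasDerivAt W (h t₀) t₀ := by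
      refine intervalIntegral.integral_hasDerivAt_right ?_ ?_ ?_
      · rw [intervalIntegrable_iff_integrableOn_Ioc_of_le (by rw [ht₁]; linarith)]
        exact (hIcc t₀ (by rw [ht₂]; linarith)).mono_set Ioc_subset_Icc_self
      · exact ⟨Iio t₂, Iio_mem_nhds (by rw [ht₂]; linarith),
          hcont_h.aestronglyMeasurable measurableSet_Iio⟩
      · exact hcont_h.continuousAt (Iio_mem_nhds (by rw [ht₂]; linarith))
    have hrep : ∀ s : ℝ, t₁ ≤ s → s < t₂ → (ystar s : Y) = Ψ s t₁ (ystar t₁ + W s) := by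
      intro s hs1 hs2
      have hIoc : IntegrableOn h (Ioc t₁ s) := (hIcc s hs2).mono_set Ioc_subset_Icc_self
      have e1 : ∫ τ in Ioc t₁ s, Ψ s τ (g τ) = Ψ s t₁ (W s) := by
        have hcongr : ∀ τ ∈ Ioc t₁ s, Ψ s τ (g τ) = Ψ s t₁ (h τ) :=
          fun τ _ => (hΨcomp s t₁ τ _).symm
        rw [setIntegral_congr_fun measurableSet_Ioc hcongr,
          ContinuousLinearMap.integral_comp_comm _ hIoc]
        congr 1
        rw [hWdef]
        exact (intervalIntegral.integral_of_le hs1).symm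
      rw [hsplit t₁ s hs1, e1, map_add]
    have ht₁lt : t₁ < t₀ := by rw [ht₁]; linarith
    have ht₂gt : t₀ < t₂ := by rw [ht₂]; linarith
    have hkey : Ψ t₀ t₁ (ystar t₁ + W t₀) = ystar t₀ := (hrep t₀ ht₁lt.le ht₂gt).symm
    have hd1 : HasDerivAt (fun s => Ψ s t₁ (ystar t₁ + W t₀)) (A t₀ (ystar t₀)) t₀ := by
      have := hΨ' t₁ t₀ (ystar t₁ + W t₀)
      rwa [hkey] at this
    have hval : Ψ t₀ t₁ (h t₀) = g t₀ := by
      rw [hhdef]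
      simp only
      rw [hΨcomp, hΨidz]
    have hd2 : HasDerivAt (fun s => Ψ s t₁ (W s - W t₀)) (g t₀) t₀ := by
      rw [hasDerivAt_iff_tendsto_slope]
      have hslopeW : Filter.Tendsto (slope W t₀) (nhdsWithin t₀ {t₀}ᶜ) (nhds (h t₀)) :=
        hasDerivAt_iff_tendsto_slope.mp hW'
      have heq : ∀ s : ℝ, slope (fun s => Ψ s t₁ (W s - W t₀)) t₀ s
          = Ψ s t₁ (slope W t₀ s) := by
        intro s
        rw [slope_def_module, slope_def_module, sub_self, map_zero, sub_zero, ContinuousLinearMap.map_smul]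
      rw [show slope (fun s => Ψ s t₁ (W s - W t₀)) t₀ = fun s => Ψ s t₁ (slope W t₀ s)
        from funext heq]
      rw [← tendsto_sub_nhds_zero_iff]
      refine squeeze_zero_norm' ?_ ?_
        (a := fun s => C * ‖slope W t₀ s - h t₀‖ + ‖Ψ s t₁ (h t₀) - g t₀‖)
      · filter_upwards [(eventually_gt_nhds ht₁lt).filter_mono nhdsWithin_le_nhds]
          with s hs
        have hdec : Ψ s t₁ (slope W t₀ s) - g t₀
            = Ψ s t₁ (slope W t₀ s - h t₀) + (Ψ s t₁ (h t₀) - g t₀) := by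
          rw [map_sub]; abel
        rw [hdec]
        refine (norm_add_le _ _).trans ?_
        exact add_le_add_left (hap s t₁ _ hs.le) _
      · have l1 : Filter.Tendsto (fun s => C * ‖slope W t₀ s - h t₀‖)
            (nhdsWithin t₀ {t₀}ᶜ) (nhds 0) := by
          have := (tendsto_sub_nhds_zero_iff.mpr hslopeW).norm.const_mul C
          simpa using this
        have l2 : Filter.Tendsto (fun s : ℝ => ‖Ψ s t₁ (h t₀) - g t₀‖)
            (nhdsWithin t₀ {t₀}ᶜ) (nhds 0) := by
          have hc : Filter.Tendsto (fun s : ℝ => ‖Ψ s t₁ (h t₀) - g t₀‖) (nhds t₀)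
              (nhds ‖Ψ t₀ t₁ (h t₀) - g t₀‖) :=
            (((hΨcont t₁ (h t₀)).sub continuous_const).norm).tendsto t₀
          rw [hval, sub_self, norm_zero] at hc
          exact hc.mono_left nhdsWithin_le_nhds
        simpa using l1.add l2
    have hsum := hd1.add hd2
    have hev : (fun s : ℝ => (ystar s : Y))
        =ᶠ[nhds t₀] fun s => Ψ s t₁ (ystar t₁ + W t₀) + Ψ s t₁ (W s - W t₀) := by
      filter_upwards [eventually_gt_nhds ht₁lt, eventually_lt_nhds ht₂gt] with s h1 h2
      rw [hrep s h1.le h2, ← map_add]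
      congr 1
      abel
    exact hsum.congr_of_eventuallyEq hev
  · -- the bound
    intro t
    rw [hfix t]
    have hle : ‖∫ τ in Iic t, Ψ t τ (g τ)‖ ≤ ∫ τ in Iic t, C * F * exp (ρ * (t - τ)) := by
      refine norm_integral_le_of_norm_le ((Eint t).const_mul (C * F)) ?_
      filter_upwards [ae_restrict_mem measurableSet_Iic] with τ hτ
      calc ‖Ψ t τ (g τ)‖ ≤ ‖Ψ t τ‖ * ‖g τ‖ := (Ψ t τ).le_opNorm _
        _ ≤ (C * exp (ρ * (t - τ))) * F :=
            mul_le_mul (hΨbdd t τ hτ) (hgF τ) (norm_nonneg _) (by positivity)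
        _ = C * F * exp (ρ * (t - τ)) := by ring
    refine hle.trans ?_
    rw [MeasureTheory.integral_const_mul, Eval t, mul_one_div]
end

section
/- Let E, F be Banach spaces, Λ ⊆ E open, and T : F × Λ → F a map that is C¹ and a uniform contraction in the first variable: ‖D₁T(y,λ)‖ ≤ q < 1 for all (y,λ). Then the fixed-point map Θ : Λ → F (T(Θ(λ),λ) = Θ(λ)) is C¹, and its derivative satisfies DΘ(λ) = (Id − D₁T(Θ(λ),λ))^{-1} ∘ D₂T(Θ(λ),λ). -/
set_option maxHeartbeats 1000000 in


/-- `C¹` dependence of the fixed point of a uniform contraction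
on parameters: if `T : F × Λ → F` is `C¹` with `‖D₁T‖ ≤ q < 1`, then the
fixed-point map `Θ` is `C¹` with
`DΘ(λ) = (Id − D₁T(Θ λ, λ))⁻¹ ∘ D₂T(Θ λ, λ)`, i.e. `DΘ λ` is the unique `D`
with `D − D₁T(Θ λ, λ) ∘ D = D₂T(Θ λ, λ)`. -/
theorem fixed_point_C1_dependence
    (E F : Type*) [NormedAddCommGroup E] [NormedSpace ℝ E]
    [NormedAddCommGroup F] [NormedSpace ℝ F] [CompleteSpace F]
    (Λ : Set E) (hΛ : IsOpen Λ)
    (T : F → E → F)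
    (D1 : F → E → F →L[ℝ] F) (D2 : F → E → E →L[ℝ] F)
    (hD1 : ∀ y : F, ∀ l ∈ Λ, HasFDerivAt (fun y' => T y' l) (D1 y l) y)
    (hD2 : ∀ y : F, ∀ l ∈ Λ, HasFDerivAt (fun l' => T y l') (D2 y l) l)
    (hD1cont : Continuous fun p : F × E => D1 p.1 p.2)
    (hD2cont : Continuous fun p : F × E => D2 p.1 p.2)
    (q : ℝ) (hq : q < 1)
    (hcontr : ∀ y : F, ∀ l ∈ Λ, ‖D1 y l‖ ≤ q)
    (Θ : E → F) (hΘ : ∀ l ∈ Λ, T (Θ l) l = Θ l) :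
    ∀ l ∈ Λ, ∃ D : E →L[ℝ] F,
      HasFDerivAt Θ D l ∧ D - (D1 (Θ l) l).comp D = D2 (Θ l) l := by
  intro l hl
  set y₀ := Θ l with hy₀
  set A := D1 y₀ l with hA
  set B := D2 y₀ l with hB
  have hq0 : (0:ℝ) ≤ q := le_trans (norm_nonneg A) (hcontr y₀ l hl)
  have hAnorm : ‖A‖ < 1 := lt_of_le_of_lt (hcontr y₀ l hl) hq
  set u : (F →L[ℝ] F)ˣ := Units.oneSub A hAnorm with hu
  set M : F →L[ℝ] F := ↑u⁻¹ with hM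
  have huval : (↑u : F →L[ℝ] F) = 1 - A := rfl
  -- the inverse kills (1 - A)
  have huM : ∀ z : F, M (z - A z) = z := by
    intro z
    have h1 : ((↑u⁻¹ * ↑u : F →L[ℝ] F)) z = z := by rw [u.inv_mul]; rfl
    have h2 : ((↑u⁻¹ * ↑u : F →L[ℝ] F)) z = M ((1 - A) z) := rfl
    have h3 : ((1 - A : F →L[ℝ] F)) z = z - A z := by
      simp [ContinuousLinearMap.sub_apply]
    rw [h2, h3] at h1
    exact h1
  -- the algebraic identity for D = M ∘ B
  have key : M.comp B - A.comp (M.comp B) = B := by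
    ext v
    have h1 : ((↑u * ↑u⁻¹ : F →L[ℝ] F)) (B v) = B v := by rw [u.mul_inv]; rfl
    have h2 : ((↑u * ↑u⁻¹ : F →L[ℝ] F)) (B v) = M (B v) - A (M (B v)) := by
      show ((1 - A : F →L[ℝ] F)) (M (B v)) = _
      simp [ContinuousLinearMap.sub_apply]
    simp only [ContinuousLinearMap.sub_apply, ContinuousLinearMap.comp_apply]
    rw [← h2, h1]
  clear_value M
  refine ⟨M.comp B, ?_, key⟩
  refine HasFDerivAt.of_isLittleO ?_
  rw [Asymptotics.isLittleO_iff]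
  intro c hc
  set K := ‖M‖ with hK
  have hK0 : 0 ≤ K := norm_nonneg M
  set Cq := (1 - q)⁻¹ * (‖B‖ + 1) with hCq
  have h1q : (0:ℝ) < 1 - q := by linarith
  have hCq0 : 0 ≤ Cq := by positivity
  set ε := c / ((K + 1) * (Cq + 1)) with hε
  have hεpos : 0 < ε := by positivity
  -- continuity of D1 near (y₀, l)
  clear_value K Cq ε
  obtain ⟨δ, hδ0, hδ⟩ := Metric.continuousAt_iff.mp hD1cont.continuousAt ε hεpos
  -- eventually facts
  have hΛev : ∀ᶠ l' in nhds l, l' ∈ Λ := hΛ.mem_nhds hl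
  have hr2 := (hD2 y₀ l hl).isLittleO
  have hr2ε : ∀ᶠ l' in nhds l, ‖T y₀ l' - T y₀ l - B (l' - l)‖ ≤ ε * ‖l' - l‖ :=
    (Asymptotics.isLittleO_iff.mp hr2) hεpos
  have hr2one : ∀ᶠ l' in nhds l, ‖T y₀ l' - T y₀ l - B (l' - l)‖ ≤ 1 * ‖l' - l‖ :=
    (Asymptotics.isLittleO_iff.mp hr2) one_pos
  have hrmin : 0 < min δ (δ / (Cq + 1)) := by positivity
  have h3 : ∀ᶠ l' in nhds l, ‖l' - l‖ < min δ (δ / (Cq + 1)) := by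
    filter_upwards [Metric.ball_mem_nhds l hrmin] with l' hl'
    simpa [Metric.mem_ball, dist_eq_norm] using hl'
  filter_upwards [hΛev, hr2ε, hr2one, h3] with l' hl'Λ h2ε h2one h3'
  have hhδ : ‖l' - l‖ < δ := lt_of_lt_of_le h3' (min_le_left _ _)
  have hhδ2 : ‖l' - l‖ < δ / (Cq + 1) := lt_of_lt_of_le h3' (min_le_right _ _)
  have hh0 : 0 ≤ ‖l' - l‖ := norm_nonneg _
  -- Step A: Lipschitz in y with constant q
  have stepA : ‖T (Θ l') l' - T y₀ l'‖ ≤ q * ‖Θ l' - y₀‖ := by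
    have := Convex.norm_image_sub_le_of_norm_hasFDerivWithin_le
      (f := fun y => T y l') (f' := fun y => D1 y l') (C := q) (s := Set.univ)
      (fun y _ => (hD1 y l' hl'Λ).hasFDerivWithinAt)
      (fun y _ => hcontr y l' hl'Λ) convex_univ (Set.mem_univ y₀) (Set.mem_univ (Θ l'))
    exact this
  -- bound on ‖T y₀ l' - T y₀ l‖
  have hTbound : ‖T y₀ l' - T y₀ l‖ ≤ (‖B‖ + 1) * ‖l' - l‖ := by
    have h1 : ‖T y₀ l' - T y₀ l‖ ≤ ‖T y₀ l' - T y₀ l - B (l' - l)‖ + ‖B (l' - l)‖ := by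
      have h0 := norm_add_le (T y₀ l' - T y₀ l - B (l' - l)) (B (l' - l))
      simpa using h0
    have h2 : ‖B (l' - l)‖ ≤ ‖B‖ * ‖l' - l‖ := B.le_opNorm _
    nlinarith [h2one]
  -- Step B: ‖Θ l' - y₀‖ ≤ Cq * ‖l' - l‖
  have stepB : ‖Θ l' - y₀‖ ≤ Cq * ‖l' - l‖ := by
    have hfix : Θ l' - y₀ = (T (Θ l') l' - T y₀ l') + (T y₀ l' - T y₀ l) := by
      rw [hΘ l' hl'Λ]
      have : T y₀ l = y₀ := hΘ l hl
      rw [this]; abel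
    have h1 : ‖Θ l' - y₀‖ ≤ q * ‖Θ l' - y₀‖ + (‖B‖ + 1) * ‖l' - l‖ := by
      calc ‖Θ l' - y₀‖ ≤ ‖T (Θ l') l' - T y₀ l'‖ + ‖T y₀ l' - T y₀ l‖ := by
            rw [hfix]; exact norm_add_le _ _
        _ ≤ q * ‖Θ l' - y₀‖ + (‖B‖ + 1) * ‖l' - l‖ := add_le_add stepA hTbound
    have h2 : (1 - q) * ‖Θ l' - y₀‖ ≤ (‖B‖ + 1) * ‖l' - l‖ := by nlinarith
    have h5 : ‖Θ l' - y₀‖ ≤ (‖B‖ + 1) * ‖l' - l‖ / (1 - q) :=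
      (le_div_iff₀ h1q).mpr (by nlinarith)
    rw [hCq]
    calc ‖Θ l' - y₀‖ ≤ (‖B‖ + 1) * ‖l' - l‖ / (1 - q) := h5
      _ = (1 - q)⁻¹ * (‖B‖ + 1) * ‖l' - l‖ := by ring
  -- Step C: Θ l' in the δ-ball around y₀
  have stepC : ‖Θ l' - y₀‖ < δ := by
    have : Cq * ‖l' - l‖ < δ := by
      have h4 : Cq * (δ / (Cq + 1)) < δ := by
        have he : Cq * (δ / (Cq + 1)) = Cq * δ / (Cq + 1) := by ring
        rw [he, div_lt_iff₀ (by positivity : (0:ℝ) < Cq + 1)]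
        nlinarith
      calc Cq * ‖l' - l‖ ≤ Cq * (δ / (Cq + 1)) :=
            mul_le_mul_of_nonneg_left (le_of_lt hhδ2) hCq0
        _ < δ := h4
      -- fallback
    exact lt_of_le_of_lt stepB this
  -- Step D: mean value estimate for T(·,l') - A on the δ-ball
  have stepD : ‖T (Θ l') l' - T y₀ l' - A (Θ l' - y₀)‖ ≤ ε * ‖Θ l' - y₀‖ := by
    have hbound : ∀ y ∈ Metric.ball y₀ δ, ‖D1 y l' - A‖ ≤ ε := by
      intro y hy
      have hd : dist (y, l') (y₀, l) < δ := by
        rw [Prod.dist_eq]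
        apply max_lt (Metric.mem_ball.mp hy)
        rw [dist_eq_norm]; exact hhδ
      have := hδ hd
      rw [dist_eq_norm] at this
      exact le_of_lt this
    have hmv := Convex.norm_image_sub_le_of_norm_hasFDerivWithin_le
      (f := fun y => T y l' - A y) (f' := fun y => D1 y l' - A) (C := ε)
      (s := Metric.ball y₀ δ)
      (fun y _ => ((hD1 y l' hl'Λ).sub (A.hasFDerivAt)).hasFDerivWithinAt)
      hbound (convex_ball y₀ δ) (Metric.mem_ball_self hδ0)
      (Metric.mem_ball.mpr (by rw [dist_eq_norm]; exact stepC))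
    have heq : T (Θ l') l' - A (Θ l') - (T y₀ l' - A y₀)
        = T (Θ l') l' - T y₀ l' - A (Θ l' - y₀) := by
      rw [map_sub]; abel
    rw [heq] at hmv
    exact hmv
  -- Step E: conclusion
  have hfix' : Θ l' - y₀ = T (Θ l') l' - T y₀ l := by
    rw [hΘ l' hl'Λ, hΘ l hl]
  have hw : Θ l' - y₀ - A (Θ l' - y₀) - B (l' - l)
      = (T (Θ l') l' - T y₀ l' - A (Θ l' - y₀)) + (T y₀ l' - T y₀ l - B (l' - l)) := by
    rw [hfix']; abel
  have hwnorm : ‖Θ l' - y₀ - A (Θ l' - y₀) - B (l' - l)‖ ≤ ε * (Cq + 1) * ‖l' - l‖ := by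
    rw [hw]
    calc ‖_ + _‖ ≤ ‖T (Θ l') l' - T y₀ l' - A (Θ l' - y₀)‖
          + ‖T y₀ l' - T y₀ l - B (l' - l)‖ := norm_add_le _ _
      _ ≤ ε * ‖Θ l' - y₀‖ + ε * ‖l' - l‖ := add_le_add stepD h2ε
      _ ≤ ε * (Cq * ‖l' - l‖) + ε * ‖l' - l‖ :=
          add_le_add_left (mul_le_mul_of_nonneg_left stepB (le_of_lt hεpos)) _
      _ = ε * (Cq + 1) * ‖l' - l‖ := by ring
  have hrepr : Θ l' - Θ l - (M.comp B) (l' - l)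
      = M (Θ l' - y₀ - A (Θ l' - y₀) - B (l' - l)) := by
    have e1 : M (Θ l' - y₀ - A (Θ l' - y₀) - B (l' - l))
        = M (Θ l' - y₀ - A (Θ l' - y₀)) - M (B (l' - l)) := by rw [map_sub]
    rw [e1, huM (Θ l' - y₀), ContinuousLinearMap.comp_apply, hy₀]
  rw [hrepr]
  have hεK : K * (ε * (Cq + 1)) ≤ c := by
    have hne : ((K + 1) * (Cq + 1)) ≠ 0 := by positivity
    have hεeq : ε * ((K + 1) * (Cq + 1)) = c := by rw [hε]; exact div_mul_cancel₀ c hne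
    have h6 : 0 ≤ ε * (Cq + 1) := mul_nonneg hεpos.le (by linarith)
    calc K * (ε * (Cq + 1)) ≤ (K + 1) * (ε * (Cq + 1)) :=
          mul_le_mul_of_nonneg_right (by linarith) h6
      _ = ε * ((K + 1) * (Cq + 1)) := by ring
      _ = c := hεeq
  calc ‖M (Θ l' - y₀ - A (Θ l' - y₀) - B (l' - l))‖
      ≤ K * ‖Θ l' - y₀ - A (Θ l' - y₀) - B (l' - l)‖ := by rw [hK]; exact M.le_opNorm _
    _ ≤ K * (ε * (Cq + 1) * ‖l' - l‖) := mul_le_mul_of_nonneg_left hwnorm hK0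
    _ = K * (ε * (Cq + 1)) * ‖l' - l‖ := by ring
    _ ≤ c * ‖l' - l‖ := mul_le_mul_of_nonneg_right hεK hh0
end
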